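/- Let m be a positive integer, π a permutation of F_{2^m}, and F : F_{2^m} × F_{2^m} → F_{2^m} the Maiorana–McFarland function F(x,y) = x·π(y). Then for every c ∈ F_{2^m} with c ≠ 1, F is not c-differential bent₁, i.e., there exist (u,v) ∈ F_{2^m} × F_{2^m} and b ∈ F_{2^m}\{0} such that W_F((u,v),b)·W_F((u,v),b·c) ≠ cC_F((0,0),b). -/

import Mathlib

open Finset
open scoped Classical

noncomputable section

noncomputable instance (p n : ℕ) [Fact p.Prime] : Fintype (GaloisField p n) :=
  Fintype.ofFinite _

/-- The absolute trace `Tr_m : F_{2^m} → F_2`. -/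
noncomputable def trAbs (m : ℕ) (x : GaloisField 2 m) : ZMod 2 :=
  Algebra.trace (ZMod 2) (GaloisField 2 m) x

/-- The Walsh transform of `F : F_{2^m} × F_{2^m} → F_{2^m}` at `((u,v), b)`. -/
noncomputable def WalshMM (m : ℕ)
    (F : GaloisField 2 m × GaloisField 2 m → GaloisField 2 m)
    (w : GaloisField 2 m × GaloisField 2 m) (b : GaloisField 2 m) : ℂ :=
  ∑ x : GaloisField 2 m, ∑ y : GaloisField 2 m,
    (-1 : ℂ) ^ (trAbs m (b * F (x, y)) + trAbs m (w.1 * x) + trAbs m (w.2 * y)).val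

/-- The `c`-autocorrelation of `F : F_{2^m} × F_{2^m} → F_{2^m}` at `((u,v), b)`. -/
noncomputable def autoCorrMM (m : ℕ)
    (F : GaloisField 2 m × GaloisField 2 m → GaloisField 2 m) (c : GaloisField 2 m)
    (w : GaloisField 2 m × GaloisField 2 m) (b : GaloisField 2 m) : ℂ :=
  ∑ x : GaloisField 2 m, ∑ y : GaloisField 2 m,
    (-1 : ℂ) ^ (trAbs m (b * (F (x + w.1, y + w.2) + c * F (x, y)))).val

lemma trAbs_add (m : ℕ) (u v : GaloisField 2 m) :
    trAbs m (u + v) = trAbs m u + trAbs m v := by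
  simp [trAbs, map_add]

lemma trAbs_zero (m : ℕ) : trAbs m 0 = 0 := by simp [trAbs]

lemma neg_one_pow_val_add (s t : ZMod 2) :
    ((-1 : ℂ)) ^ (s + t).val = (-1 : ℂ) ^ s.val * (-1 : ℂ) ^ t.val := by
  rw [← pow_add]
  have : (s + t).val = (s.val + t.val) % 2 := ZMod.val_add s t
  rw [this, ← neg_one_pow_eq_pow_mod_two]

/-- The basic additive character sum over `F_{2^m}`. -/
lemma charSum (m : ℕ) (a : GaloisField 2 m) :
    ∑ x : GaloisField 2 m, (-1 : ℂ) ^ (trAbs m (a * x)).val =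
      if a = 0 then (Fintype.card (GaloisField 2 m) : ℂ) else 0 := by
  split_ifs with h
  · subst h
    simp [trAbs_zero, trAbs]
  · -- find z with trAbs m (a*z) = 1
    have hnd := traceForm_nondegenerate (ZMod 2) (GaloisField 2 m)
    have hz : ∃ z, trAbs m (a * z) ≠ 0 := by
      by_contra! hf
      exact h (hnd.1 a (fun z => by simpa [Algebra.traceForm_apply, trAbs] using hf z))
    obtain ⟨z, hz⟩ := hz
    have hz1 : trAbs m (a * z) = 1 := by
      have : ∀ t : ZMod 2, t ≠ 0 → t = 1 := by decide
      exact this _ hz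
    set S := ∑ x : GaloisField 2 m, (-1 : ℂ) ^ (trAbs m (a * x)).val with hS
    have key : S = ∑ x : GaloisField 2 m, (-1 : ℂ) ^ (trAbs m (a * (x + z))).val :=
      (Fintype.sum_equiv (Equiv.addRight z) _ _ (fun x => rfl)).symm
    have hneg : ∀ x : GaloisField 2 m,
        (-1 : ℂ) ^ (trAbs m (a * (x + z))).val = -((-1 : ℂ) ^ (trAbs m (a * x)).val) := by
      intro x
      have : trAbs m (a * (x + z)) = trAbs m (a * x) + trAbs m (a * z) := by
        rw [mul_add, trAbs_add]
      rw [this, neg_one_pow_val_add, hz1]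
      simp [ZMod.val_one]
    have h2 : S = -S := by
      conv_lhs => rw [key]
      rw [Finset.sum_congr rfl (fun x _ => hneg x), Finset.sum_neg_distrib]
    linear_combination h2 / 2

lemma sum_ite_pi (m : ℕ) (π : GaloisField 2 m → GaloisField 2 m)
    (hπ : Function.Bijective π) (a : GaloisField 2 m) (ha : a ≠ 0) (q : ℂ) :
    ∑ y : GaloisField 2 m, (if a * π y = 0 then q else 0) = q := by
  obtain ⟨y0, hy0⟩ := hπ.surjective 0
  have hcong : ∀ y : GaloisField 2 m,
      (if a * π y = 0 then q else 0) = if y = y0 then q else 0 := by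
    intro y
    congr 1
    simp only [mul_eq_zero, eq_iff_iff]
    constructor
    · rintro (h | h)
      · exact absurd h ha
      · exact hπ.injective (h.trans hy0.symm)
    · rintro rfl
      exact Or.inr hy0
  simp only [hcong]
  simp

theorem statement_11 (m : ℕ) (hm : 0 < m)
    (π : GaloisField 2 m → GaloisField 2 m) (hπ : Function.Bijective π)
    (c : GaloisField 2 m) (hc : c ≠ 1) :
    ∃ u v b : GaloisField 2 m, b ≠ 0 ∧
      WalshMM m (fun z => z.1 * π z.2) (u, v) b *
          WalshMM m (fun z => z.1 * π z.2) (u, v) (b * c) ≠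
        autoCorrMM m (fun z => z.1 * π z.2) c (0, 0) b := by
  set q : ℕ := Fintype.card (GaloisField 2 m) with hq
  have hq2 : 2 ≤ q := by
    rw [hq, ← Nat.card_eq_fintype_card, GaloisField.card 2 m hm.ne']
    calc 2 = 2 ^ 1 := (pow_one 2).symm
    _ ≤ 2 ^ m := Nat.pow_le_pow_right (by norm_num) hm
  -- Walsh transform at (0,0) and b ≠ 0 equals q
  have walsh_eval : ∀ b : GaloisField 2 m, b ≠ 0 →
      WalshMM m (fun z => z.1 * π z.2) (0, 0) b = (q : ℂ) := by
    intro b hb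
    unfold WalshMM
    rw [Finset.sum_comm]
    have hterm : ∀ y : GaloisField 2 m,
        (∑ x : GaloisField 2 m, (-1 : ℂ) ^
          (trAbs m (b * ((fun z : GaloisField 2 m × GaloisField 2 m => z.1 * π z.2) (x, y)))
            + trAbs m ((((0 : GaloisField 2 m), (0 : GaloisField 2 m))).1 * x)
            + trAbs m ((((0 : GaloisField 2 m), (0 : GaloisField 2 m))).2 * y)).val)
          = if b * π y = 0 then (q : ℂ) else 0 := by
      intro y
      rw [← charSum m (b * π y)]
      apply Finset.sum_congr rfl
      intro x _
      congr 2
      simp only [zero_mul, trAbs_zero, add_zero]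
      ring_nf
    simp only [hterm]
    exact sum_ite_pi m π hπ b hb (q : ℂ)
  -- Walsh at (0,0) and b = 0 equals q^2
  have walsh_zero : WalshMM m (fun z => z.1 * π z.2) (0, 0) 0 = (q : ℂ) * q := by
    unfold WalshMM
    have : ∀ x y : GaloisField 2 m,
        (trAbs m ((0 : GaloisField 2 m) * ((fun z : GaloisField 2 m × GaloisField 2 m => z.1 * π z.2) (x, y)))
          + trAbs m ((((0 : GaloisField 2 m), (0 : GaloisField 2 m))).1 * x)
          + trAbs m ((((0 : GaloisField 2 m), (0 : GaloisField 2 m))).2 * y)) = 0 := by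
      intro x y
      simp [zero_mul, trAbs_zero]
    simp only [this]
    simp [Finset.card_univ, hq, mul_comm]
  -- autocorrelation at (0,0), b ≠ 0 equals q
  have auto_eval : ∀ b : GaloisField 2 m, b ≠ 0 →
      autoCorrMM m (fun z => z.1 * π z.2) c (0, 0) b = (q : ℂ) := by
    intro b hb
    have h1c : (1 + c) ≠ 0 := by
      intro h
      apply hc
      have : CharP (GaloisField 2 m) 2 := inferInstance
      have := CharTwo.neg_eq (R := GaloisField 2 m) 1
      have hc' : c = -1 := by linear_combination h
      rw [hc', this]
    unfold autoCorrMM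
    rw [Finset.sum_comm]
    have hterm : ∀ y : GaloisField 2 m,
        (∑ x : GaloisField 2 m, (-1 : ℂ) ^
          (trAbs m (b * ((fun z : GaloisField 2 m × GaloisField 2 m => z.1 * π z.2)
              (x + (((0 : GaloisField 2 m), (0 : GaloisField 2 m))).1,
               y + (((0 : GaloisField 2 m), (0 : GaloisField 2 m))).2)
            + c * ((fun z : GaloisField 2 m × GaloisField 2 m => z.1 * π z.2) (x, y))))).val)
          = if (b * (1 + c)) * π y = 0 then (q : ℂ) else 0 := by
      intro y
      rw [← charSum m ((b * (1 + c)) * π y)]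
      apply Finset.sum_congr rfl
      intro x _
      congr 2
      simp only [add_zero]
      ring_nf
    simp only [hterm]
    exact sum_ite_pi m π hπ (b * (1 + c)) (mul_ne_zero hb h1c) (q : ℂ)
  refine ⟨0, 0, 1, one_ne_zero, ?_⟩
  rw [walsh_eval 1 one_ne_zero, auto_eval 1 one_ne_zero, one_mul]
  by_cases hc0 : c = 0
  · rw [hc0, walsh_zero]
    intro h
    have : (q : ℂ) * ((q : ℂ) * q) = ((q * (q * q) : ℕ) : ℂ) := by push_cast; ring
    rw [this] at h
    have hn : q * (q * q) = q := Nat.cast_injective h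
    nlinarith
  · rw [walsh_eval c hc0]
    intro h
    have : (q : ℂ) * (q : ℂ) = ((q * q : ℕ) : ℂ) := by push_cast; ring
    rw [this] at h
    have hn : q * q = q := Nat.cast_injective h
    nlinarith
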